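/- Let d, d', k be positive integers. Then lcm(o_d(k), o_{d'}(k)) = o_{lcm(d,d')}(k) and gcd(o_d(k), o_{d'}(k)) = o_{gcd(d,d')}(k). -/

import Mathlib

open scoped DirectSum

noncomputable section

/-- `o_d(k)`: the gcd, taken as a nonnegative integer, of the set
`{u ^ d - 1 | u ≡ 1 (mod k)}`, realized as the nonnegative generator of the ideal of `ℤ`
spanned by this set. -/
def oo (d k : ℕ) : ℕ :=
  (Submodule.IsPrincipal.generator
    (Ideal.span {z : ℤ | ∃ u : ℤ, (k : ℤ) ∣ (u - 1) ∧ z = u ^ d - 1})).natAbs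

private lemma oo_spec (d k : ℕ) (m : ℤ) :
    m ∣ (oo d k : ℤ) ↔ ∀ u : ℤ, (k : ℤ) ∣ (u - 1) → m ∣ u ^ d - 1 := by
  have h1 : Ideal.span {Submodule.IsPrincipal.generator
      (Ideal.span {z : ℤ | ∃ u : ℤ, (k : ℤ) ∣ (u - 1) ∧ z = u ^ d - 1})} =
      Ideal.span {z : ℤ | ∃ u : ℤ, (k : ℤ) ∣ (u - 1) ∧ z = u ^ d - 1} :=
    Submodule.IsPrincipal.span_singleton_generator _
  unfold oo
  rw [Int.dvd_natAbs, ← Ideal.mem_span_singleton, ← Ideal.span_singleton_le_iff_mem,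
    h1, Ideal.span_le]
  constructor
  · intro h u hu
    exact Ideal.mem_span_singleton.mp (h ⟨u, hu, rfl⟩)
  · rintro h z ⟨u, hu, rfl⟩
    exact Ideal.mem_span_singleton.mpr (h u hu)

private lemma oo_dvd (d k : ℕ) (u : ℤ) (hu : (k : ℤ) ∣ (u - 1)) :
    (oo d k : ℤ) ∣ u ^ d - 1 :=
  (oo_spec d k _).mp dvd_rfl u hu

private lemma oo_dvd_oo {d e : ℕ} (k : ℕ) (h : d ∣ e) : oo d k ∣ oo e k := by
  rw [← Int.natCast_dvd_natCast, oo_spec]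
  intro u hu
  obtain ⟨c, rfl⟩ := h
  refine (oo_dvd d k u hu).trans ?_
  rw [pow_mul]
  simpa using sub_dvd_pow_sub_pow (u ^ d) 1 c

private lemma oo_ne_zero {d k : ℕ} (hd : d ≠ 0) (hk : k ≠ 0) : oo d k ≠ 0 := by
  intro h0
  have h := oo_dvd d k ((k : ℤ) + 1) ⟨1, by ring⟩
  rw [h0] at h
  have h2 : ((k : ℤ) + 1) ^ d - 1 = 0 := zero_dvd_iff.mp (by exact_mod_cast h)
  have hk1 : (1 : ℤ) < (k : ℤ) + 1 := by
    have : 1 ≤ (k : ℤ) := by exact_mod_cast Nat.one_le_iff_ne_zero.mpr hk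
    linarith
  have h3 : (1 : ℤ) < ((k : ℤ) + 1) ^ d := one_lt_pow₀ hk1 hd
  linarith

private lemma F_mono (p : ℕ) (hp : p.Prime) {e e' k : ℕ} (he : e ≠ 0) (he' : e' ≠ 0)
    (hk : k ≠ 0) (h : e.factorization p ≤ e'.factorization p) :
    (oo e k).factorization p ≤ (oo e' k).factorization p := by
  by_cases hpk : p ∣ k
  · -- main case: p divides k
    set a := e.factorization p with ha
    have hne_pa : oo (p ^ a) k ≠ 0 := oo_ne_zero (pow_ne_zero _ hp.ne_zero) hk
    have hne_e : oo e k ≠ 0 := oo_ne_zero he hk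
    have hne_e' : oo e' k ≠ 0 := oo_ne_zero he' hk
    have hstep1 : (oo (p ^ a) k).factorization p ≤ (oo e' k).factorization p := by
      have hdvd : p ^ a ∣ e' := (pow_dvd_pow p h).trans (Nat.ordProj_dvd e' p)
      exact Finsupp.le_def.mp
        ((Nat.factorization_le_iff_dvd hne_pa hne_e').mpr (oo_dvd_oo k hdvd)) p
    refine le_trans ?_ hstep1
    set v := (oo (p ^ a) k).factorization p with hv
    by_contra hcon
    push_neg at hcon
    have hdvd : p ^ (v + 1) ∣ oo e k :=
      (hp.pow_dvd_iff_le_factorization hne_e).mpr hcon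
    have hnotdvd : ¬ (p : ℤ) ^ (v + 1) ∣ (oo (p ^ a) k : ℤ) := by
      intro hz
      have : p ^ (v + 1) ∣ oo (p ^ a) k := by exact_mod_cast hz
      have := (hp.pow_dvd_iff_le_factorization hne_pa).mp this
      omega
    rw [oo_spec] at hnotdvd
    push_neg at hnotdvd
    obtain ⟨u, hu, hnd⟩ := hnotdvd
    set m := e / p ^ a with hm
    have hem : e = p ^ a * m := (Nat.ordProj_mul_ordCompl_eq_self e p).symm
    have hpm : ¬ p ∣ m := Nat.not_dvd_ordCompl hp he
    set x : ℤ := u ^ (p ^ a) with hx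
    have hpu : (p : ℤ) ∣ u - 1 := (Int.natCast_dvd_natCast.mpr hpk).trans hu
    have hx1 : (p : ℤ) ∣ x - 1 :=
      hpu.trans (by simpa using sub_dvd_pow_sub_pow u 1 (p ^ a))
    set s : ℤ := ∑ i ∈ Finset.range m, x ^ i with hs
    have hgeom : s * (x - 1) = x ^ m - 1 := geom_sum_mul x m
    have hps : ¬ (p : ℤ) ∣ s := by
      intro hdvds
      have hsm : (p : ℤ) ∣ s - (m : ℤ) := by
        have hsum : s - (m : ℤ) = ∑ i ∈ Finset.range m, (x ^ i - 1) := by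
          rw [Finset.sum_sub_distrib]; simp; exact hs
        rw [hsum]
        exact Finset.dvd_sum fun i _ =>
          hx1.trans (by simpa using sub_dvd_pow_sub_pow x 1 i)
      have : (p : ℤ) ∣ (m : ℤ) := by
        have := dvd_sub hdvds hsm
        simpa using this
      exact hpm (Int.natCast_dvd_natCast.mp this)
    have h4 : (p : ℤ) ^ (v + 1) ∣ s * (x - 1) := by
      have h5 : ((p : ℤ)) ^ (v + 1) ∣ (oo e k : ℤ) := by
        exact_mod_cast Int.natCast_dvd_natCast.mpr hdvd
      have h6 := h5.trans (oo_dvd e k u hu)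
      rw [hem, pow_mul] at h6
      rwa [hgeom]
    have hprime : Prime (p : ℤ) := Int.prime_iff_natAbs_prime.mpr (by simpa using hp)
    exact hnd (hprime.pow_dvd_of_dvd_mul_left (v + 1) hps h4)
  · -- p does not divide k : the valuation of oo e k is 0
    have hco : IsCoprime ((k : ℤ)) ((p : ℤ)) :=
      Nat.isCoprime_iff_coprime.mpr ((hp.coprime_iff_not_dvd.mpr hpk).symm)
    obtain ⟨A, B, hab⟩ := hco
    set u : ℤ := 1 - A * (k : ℤ) with hudef
    have hu1 : (k : ℤ) ∣ u - 1 := ⟨-A, by rw [hudef]; ring⟩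
    have hup : (p : ℤ) ∣ u := ⟨B, by rw [hudef]; linarith⟩
    have hnp : ¬ p ∣ oo e k := by
      intro hdvd
      have h2 : (p : ℤ) ∣ u ^ e - 1 :=
        (Int.natCast_dvd_natCast.mpr hdvd).trans (oo_dvd e k u hu1)
      have h3 : (p : ℤ) ∣ u ^ e := dvd_pow hup he
      have h4 : (p : ℤ) ∣ 1 := by
        have := dvd_sub h3 h2
        simpa using this
      have := Int.le_of_dvd one_pos h4
      have := hp.two_le
      omega
    rw [Nat.factorization_eq_zero_of_not_dvd hnp]
    exact Nat.zero_le _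

theorem stmt14 (d d' k : ℕ) (hd : 0 < d) (hd' : 0 < d') (hk : 0 < k) :
    Nat.lcm (oo d k) (oo d' k) = oo (Nat.lcm d d') k ∧
      Nat.gcd (oo d k) (oo d' k) = oo (Nat.gcd d d') k := by
  have hd0 : d ≠ 0 := hd.ne'
  have hd'0 : d' ≠ 0 := hd'.ne'
  have hk0 : k ≠ 0 := hk.ne'
  have hlcm0 : Nat.lcm d d' ≠ 0 := Nat.lcm_ne_zero hd0 hd'0
  have hgcd0 : Nat.gcd d d' ≠ 0 := fun h => hd0 (Nat.eq_zero_of_gcd_eq_zero_left h)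
  have hne_d : oo d k ≠ 0 := oo_ne_zero hd0 hk0
  have hne_d' : oo d' k ≠ 0 := oo_ne_zero hd'0 hk0
  have hne_l : oo (Nat.lcm d d') k ≠ 0 := oo_ne_zero hlcm0 hk0
  have hne_g : oo (Nat.gcd d d') k ≠ 0 := oo_ne_zero hgcd0 hk0
  have hne_lo : Nat.lcm (oo d k) (oo d' k) ≠ 0 := Nat.lcm_ne_zero hne_d hne_d'
  have hne_go : Nat.gcd (oo d k) (oo d' k) ≠ 0 :=
    fun h => hne_d (Nat.eq_zero_of_gcd_eq_zero_left h)
  have hfl : ∀ p, (Nat.lcm d d').factorization p = max (d.factorization p) (d'.factorization p) := by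
    intro p
    rw [Nat.factorization_lcm hd0 hd'0, Finsupp.sup_apply]
  have hfg : ∀ p, (Nat.gcd d d').factorization p = min (d.factorization p) (d'.factorization p) := by
    intro p
    rw [Nat.factorization_gcd hd0 hd'0, Finsupp.inf_apply]
  constructor
  · apply Nat.dvd_antisymm
    · exact Nat.lcm_dvd (oo_dvd_oo k (Nat.dvd_lcm_left d d'))
        (oo_dvd_oo k (Nat.dvd_lcm_right d d'))
    · rw [← Nat.factorization_le_iff_dvd hne_l hne_lo, Finsupp.le_def]
      intro p
      by_cases hp : p.Prime
      · rw [Nat.factorization_lcm hne_d hne_d', Finsupp.sup_apply]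
        rcases le_total (d.factorization p) (d'.factorization p) with h | h
        · exact le_trans
            (F_mono p hp hlcm0 hd'0 hk0 (by rw [hfl p]; omega)) le_sup_right
        · exact le_trans
            (F_mono p hp hlcm0 hd0 hk0 (by rw [hfl p]; omega)) le_sup_left
      · simp [Nat.factorization_eq_zero_of_not_prime _ hp]
  · apply Nat.dvd_antisymm
    · rw [← Nat.factorization_le_iff_dvd hne_go hne_g, Finsupp.le_def]
      intro p
      by_cases hp : p.Prime
      · rw [Nat.factorization_gcd hne_d hne_d', Finsupp.inf_apply]
        rcases le_total (d.factorization p) (d'.factorization p) with h | h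
        · exact le_trans inf_le_left
            (F_mono p hp hd0 hgcd0 hk0 (by rw [hfg p]; omega))
        · exact le_trans inf_le_right
            (F_mono p hp hd'0 hgcd0 hk0 (by rw [hfg p]; omega))
      · simp [Nat.factorization_eq_zero_of_not_prime _ hp]
    · exact Nat.dvd_gcd (oo_dvd_oo k (Nat.gcd_dvd_left d d'))
        (oo_dvd_oo k (Nat.gcd_dvd_right d d'))

end
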